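/- Let R be a commutative noetherian ring. Then R is artinian if and only if every torsion-free class of the category of finitely generated R-modules is a Serre subcategory (i.e., every class of finitely generated R-modules closed under submodules and extensions is also closed under quotient modules). -/

import Mathlib

universe u

section Defs

variable (A : Type u) [Ring A]

/-- `C` is a subcategory of `mod A`: it is closed under isomorphisms, contains the zero
modules, and consists of finitely generated modules. -/
def IsModSubcat (C : Set (ModuleCat.{u} A)) : Prop :=
  (∀ M N : ModuleCat.{u} A, (M ≃ₗ[A] N) → M ∈ C → N ∈ C) ∧
  (∀ M : ModuleCat.{u} A, Subsingleton M → M ∈ C) ∧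
  (∀ M ∈ C, Module.Finite A M)

/-- `C` is closed under submodules. -/
def SubmoduleClosed (C : Set (ModuleCat.{u} A)) : Prop :=
  ∀ M ∈ C, ∀ N : Submodule A M, ModuleCat.of A N ∈ C

/-- `C` is closed under quotient modules. -/
def QuotClosed (C : Set (ModuleCat.{u} A)) : Prop :=
  ∀ M ∈ C, ∀ N : Submodule A M, ModuleCat.of A (M ⧸ N) ∈ C

/-- `C` is closed under images: for every `A`-linear map `f : C₁ → C₂` with `C₁, C₂ ∈ C`,
the image of `f` belongs to `C`. -/
def ImagesClosed (C : Set (ModuleCat.{u} A)) : Prop :=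
  ∀ M₁ ∈ C, ∀ M₂ ∈ C, ∀ f : M₁ →ₗ[A] M₂, ModuleCat.of A (LinearMap.range f) ∈ C

/-- `C` is closed under kernels: for every `A`-linear map `f : C₁ → C₂` with `C₁, C₂ ∈ C`,
the kernel of `f` belongs to `C`. -/
def KernelsClosed (C : Set (ModuleCat.{u} A)) : Prop :=
  ∀ M₁ ∈ C, ∀ M₂ ∈ C, ∀ f : M₁ →ₗ[A] M₂, ModuleCat.of A (LinearMap.ker f) ∈ C

/-- `C` is closed under extensions: for every short exact sequence
`0 → L → M → N → 0` of finitely generated modules with `L, N ∈ C`, we have `M ∈ C`. -/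
def ExtClosed (C : Set (ModuleCat.{u} A)) : Prop :=
  ∀ (L M N : ModuleCat.{u} A), Module.Finite A M →
    ∀ (f : L →ₗ[A] M) (g : M →ₗ[A] N),
      Function.Injective f → Function.Surjective g →
      LinearMap.range f = LinearMap.ker g →
      L ∈ C → N ∈ C → M ∈ C

end Defs

/-!
STATEMENT 12: A commutative noetherian ring `R` is artinian iff every torsion-free class
of `mod R` (i.e., every class of finitely generated `R`-modules closed under submodules
and extensions) is a Serre subcategory (closed, in addition, under quotient modules).
-/

section AuxA
variable {R : Type u} [CommRing R]

/-- In an artinian ring, some power of an ideal is idempotent, witnessed by an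
"idempotent generator" behaviour: there is `e ∈ m^(n+1)` acting as identity on `m^(n+1)`. -/
lemma exists_idem_elem [IsArtinianRing R] [IsNoetherianRing R] (m : Ideal R) :
    ∃ (n : ℕ) (e : R), e ∈ m ^ (n + 1) ∧ ∀ a ∈ m ^ (n + 1), e * a = a := by
  have wf : WellFounded ((· < ·) : Ideal R → Ideal R → Prop) :=
    wellFounded_lt
  obtain ⟨J, hJ, hmin⟩ := wf.has_min (Set.range fun k : ℕ => m ^ (k + 1)) ⟨m ^ 1, ⟨0, rfl⟩⟩
  obtain ⟨n, rfl⟩ := hJ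
  have hle : m ^ (n + 2) ≤ m ^ (n + 1) := Ideal.pow_le_pow_right (by omega)
  have heq : m ^ (n + 2) = m ^ (n + 1) :=
    (lt_or_eq_of_le hle).resolve_left (hmin _ ⟨n + 1, rfl⟩)
  have key : ∀ k : ℕ, m ^ (n + 1 + k) = m ^ (n + 1) := by
    intro k
    induction k with
    | zero => rfl
    | succ k ih =>
      have h' : n + 1 + (k + 1) = (n + 1 + k) + 1 := by omega
      rw [h', pow_succ, ih]
      calc m ^ (n + 1) * m = m ^ (n + 2) := (pow_succ m (n + 1)).symm
        _ = m ^ (n + 1) := heq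
  set I := m ^ (n + 1) with hI
  have hII : I ≤ I • I := by
    have : I * I = I := by
      rw [hI, ← pow_add]
      exact key (n + 1)
    rw [smul_eq_mul, this]
  obtain ⟨r, hr1, hr⟩ :=
    Submodule.exists_sub_one_mem_and_smul_eq_zero_of_fg_of_le_smul I I
      (IsNoetherian.noetherian I) hII
  refine ⟨n, 1 - r, ?_, ?_⟩
  · simpa using I.neg_mem hr1
  · intro a ha
    have h0 := hr a ha
    rw [smul_eq_mul] at h0
    rw [sub_mul, one_mul, h0, sub_zero]

/-- Key lemma: over an artinian ring, a finite module whose annihilator is contained in a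
maximal ideal `m` contains a nonzero element killed by `m`. -/
lemma exists_elem_smul_eq_zero [IsArtinianRing R] [IsNoetherianRing R]
    {M : Type u} [AddCommGroup M] [Module R M] [Module.Finite R M]
    (m : Ideal R) (hm : m.IsMaximal)
    (hann : ∀ a : R, (∀ y : M, a • y = 0) → a ∈ m) :
    ∃ x : M, x ≠ 0 ∧ ∀ a ∈ m, a • x = 0 := by
  obtain ⟨n, e, heI, he⟩ := exists_idem_elem m
  set M' : Submodule R M := LinearMap.ker (LinearMap.lsmul R M e) with hM'
  have hmem : ∀ x : M, x ∈ M' ↔ e • x = 0 := by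
    intro x; simp [hM', LinearMap.mem_ker]
  have hM'ne : M' ≠ ⊥ := by
    intro hbot
    have hxe : ∀ x : M, x = e • x := by
      intro x
      have : x - e • x ∈ M' := by
        rw [hmem]
        have : e * e = e := he e heI
        rw [smul_sub, ← mul_smul, this, sub_self]
      rw [hbot, Submodule.mem_bot, sub_eq_zero] at this
      exact this
    have h1e : (1 - e) ∈ m := by
      apply hann
      intro y
      rw [sub_smul, one_smul, ← hxe y, sub_self]
    have hem : e ∈ m := Ideal.pow_le_self (Nat.succ_ne_zero n) heI
    have : (1 : R) ∈ m := by
      have := m.add_mem h1e hem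
      simpa using this
    exact hm.ne_top (m.eq_top_iff_one.mpr this)
  -- the chain m^j • M' reaches ⊥
  have hkill : m ^ (n + 1) • M' = ⊥ := by
    rw [eq_bot_iff]
    apply Submodule.smul_le.mpr
    intro a ha x hx
    have hae : a * e = a := by rw [mul_comm]; exact he a ha
    have hex0 : e • x = 0 := (hmem x).mp hx
    have hax : a • x = a • (e • x) := by rw [← mul_smul, hae]
    rw [Submodule.mem_bot, hax, hex0, smul_zero]
  have hex : ∃ j : ℕ, m ^ j • M' = ⊥ := ⟨n + 1, hkill⟩
  classical
  have hjspec := Nat.find_spec hex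
  have hjpos : Nat.find hex ≠ 0 := by
    intro h0
    apply hM'ne
    rw [h0, pow_zero, Ideal.one_eq_top, Submodule.top_smul] at hjspec
    exact hjspec
  obtain ⟨j', hj'⟩ : ∃ j', Nat.find hex = j' + 1 := ⟨Nat.find hex - 1, by omega⟩
  rw [hj'] at hjspec
  have hne : m ^ j' • M' ≠ ⊥ := Nat.find_min hex (by omega)
  obtain ⟨x, hxmem, hx0⟩ := Submodule.exists_mem_ne_zero_of_ne_bot hne
  refine ⟨x, hx0, fun a ha => ?_⟩
  have hmemj : a • x ∈ m ^ (j' + 1) • M' := by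
    have hpow : m ^ (j' + 1) = m * m ^ j' := by rw [pow_succ, mul_comm]
    rw [hpow, ← smul_eq_mul, Submodule.smul_assoc]
    exact Submodule.smul_mem_smul ha hxmem
  rw [hjspec] at hmemj
  simpa using hmemj
end AuxA

section AuxB
variable {R : Type u} [CommRing R]

lemma akizuki [IsNoetherianRing R] (H : ∀ p : Ideal R, p.IsPrime → p.IsMaximal) :
    IsArtinianRing R := by
  have main : ∀ I : Ideal R, IsArtinian R (R ⧸ I) := by
    by_contra hA
    push_neg at hA
    have hS : {I : Ideal R | ¬ IsArtinian R (R ⧸ I)}.Nonempty := by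
      obtain ⟨I, hI⟩ := hA
      exact ⟨I, hI⟩
    obtain ⟨I, hI, hmax⟩ :=
      (set_has_maximal_iff_noetherian.mpr ‹IsNoetherianRing R›) _ hS
    have hIne : I ≠ ⊤ := by
      intro h
      apply hI
      rw [h]
      have : Subsingleton (R ⧸ (⊤ : Ideal R)) :=
        Submodule.Quotient.subsingleton_iff.mpr rfl
      infer_instance
    have hprime : Ideal.IsPrime I := by
      refine ⟨hIne, ?_⟩
      intro a b hab
      by_contra hcon
      push_neg at hcon
      obtain ⟨ha, hb⟩ := hcon
      set K := I.colon (Ideal.span {b}) with hK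
      set J := I ⊔ Ideal.span {b} with hJ
      have hIK : I < K := by
        refine lt_of_le_of_ne (fun x hx => ?_) (fun h => ha (h ▸ ?_))
        · exact Submodule.mem_colon_span_singleton.mpr (Ideal.mul_mem_right b I hx)
        · exact Submodule.mem_colon_span_singleton.mpr hab
      have hIJ : I < J := by
        refine lt_of_le_of_ne le_sup_left (fun h => hb ?_)
        rw [h]
        exact Submodule.mem_sup_right (Ideal.subset_span rfl)
      have hKart : IsArtinian R (R ⧸ K) := by
        by_contra h
        exact hmax K h hIK
      have hJart : IsArtinian R (R ⧸ J) := by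
        by_contra h
        exact hmax J h hIJ
      -- the exact sequence 0 → R/K →(·b) R/I → R/J → 0
      have hcond : K ≤ Submodule.comap (LinearMap.toSpanSingleton R R b) I := by
        intro x hx
        simpa [LinearMap.toSpanSingleton, smul_eq_mul] using
          Submodule.mem_colon_span_singleton.mp hx
      set f : (R ⧸ K) →ₗ[R] (R ⧸ I) :=
        Submodule.mapQ K I (LinearMap.toSpanSingleton R R b) hcond with hf
      have hcond2 : I ≤ Submodule.comap (LinearMap.id : R →ₗ[R] R) J := le_sup_left
      set g : (R ⧸ I) →ₗ[R] (R ⧸ J) := Submodule.mapQ I J LinearMap.id hcond2 with hg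
      have hfinj : Function.Injective f := by
        rw [← LinearMap.ker_eq_bot, eq_bot_iff]
        intro u hu
        obtain ⟨x, rfl⟩ := Submodule.Quotient.mk_surjective K u
        rw [LinearMap.mem_ker, hf, Submodule.mapQ_apply] at hu
        have hxb : x • b ∈ I := (Submodule.Quotient.mk_eq_zero I).mp hu
        have : x ∈ K := Submodule.mem_colon_span_singleton.mpr (by simpa [smul_eq_mul] using hxb)
        rw [Submodule.mem_bot, Submodule.Quotient.mk_eq_zero]; exact this
      have hgsurj : Function.Surjective g := by
        intro z
        obtain ⟨x, rfl⟩ := Submodule.Quotient.mk_surjective J z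
        exact ⟨Submodule.Quotient.mk x, by rw [hg, Submodule.mapQ_apply, LinearMap.id_apply]⟩
      have hrk : LinearMap.range f = LinearMap.ker g := by
        ext u
        obtain ⟨x, rfl⟩ := Submodule.Quotient.mk_surjective I u
        constructor
        · rintro ⟨v, hv⟩
          obtain ⟨y, rfl⟩ := Submodule.Quotient.mk_surjective K v
          rw [hf, Submodule.mapQ_apply] at hv
          rw [LinearMap.mem_ker, hg, ← hv, Submodule.mapQ_apply, LinearMap.id_apply,
            Submodule.Quotient.mk_eq_zero]
          exact Submodule.mem_sup_right (Ideal.mem_span_singleton.mpr ⟨y, mul_comm b y ▸ rfl⟩)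
        · intro hu
          rw [LinearMap.mem_ker, hg, Submodule.mapQ_apply, LinearMap.id_apply,
            Submodule.Quotient.mk_eq_zero] at hu
          rw [hJ] at hu
          obtain ⟨i, hi, c, hc, rfl⟩ := Submodule.mem_sup.mp hu
          obtain ⟨d, rfl⟩ := Ideal.mem_span_singleton.mp hc
          refine ⟨Submodule.Quotient.mk d, ?_⟩
          rw [hf, Submodule.mapQ_apply]
          rw [Submodule.Quotient.eq]
          simpa [LinearMap.toSpanSingleton, smul_eq_mul, mul_comm] using I.neg_mem hi
      exact hI (isArtinian_of_range_eq_ker f g hrk)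
    have hImax : Ideal.IsMaximal I := H I hprime
    have hsimple : IsSimpleModule R (R ⧸ I) := isSimpleModule_iff_isCoatom.mpr hImax.out
    exact hI inferInstance
  have := main ⊥
  exact isArtinian_of_linearEquiv (Submodule.quotEquivOfEqBot (⊥ : Ideal R) rfl)
end AuxB

section Bwd
variable {R : Type u} [CommRing R] [IsNoetherianRing R]

lemma prime_isMaximal_of_closure
    (h : ∀ C : Set (ModuleCat.{u} R), IsModSubcat R C →
        SubmoduleClosed R C → ExtClosed R C → QuotClosed R C)
    (p : Ideal R) (hp : p.IsPrime) : p.IsMaximal := by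
  by_contra hpm
  obtain ⟨m, hm, hpmle⟩ := p.exists_le_maximal hp.ne_top
  have hplt : p < m := lt_of_le_of_ne hpmle (fun hh => hpm (hh ▸ hm))
  obtain ⟨a, ham, hap⟩ := SetLike.exists_of_lt hplt
  set C : Set (ModuleCat.{u} R) :=
    {X | Module.Finite R X ∧ ∀ (x : X) (r : R), r ∉ p → r • x = 0 → x = 0} with hC
  have hsubcat : IsModSubcat R C := by
    refine ⟨?_, ?_, ?_⟩
    · rintro X Y e ⟨hfin, hcond⟩
      refine ⟨Module.Finite.equiv e, fun x r hr hrx => ?_⟩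
      have h1 : e.symm (r • x) = r • e.symm x := map_smul e.symm r x
      have h2 : e.symm x = 0 := hcond (e.symm x) r hr (by rw [← h1, hrx, map_zero])
      calc x = e (e.symm x) := (e.apply_symm_apply x).symm
        _ = e 0 := by rw [h2]
        _ = 0 := map_zero e
    · intro X hX
      refine ⟨?_, fun x r _ _ => Subsingleton.elim x 0⟩
      have : Finite X := Finite.of_subsingleton
      exact Module.Finite.of_finite
    · exact fun X hX => hX.1
  have hsub : SubmoduleClosed R C := by
    rintro X ⟨hfin, hcond⟩ N
    haveI : Module.Finite R X := hfin
    refine ⟨inferInstanceAs (Module.Finite R ↥N), ?_⟩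
    intro x r hr hrx
    let x' : ↥N := x
    have hrx' : r • x' = 0 := hrx
    have h1 : r • (x' : X) = 0 := by
      rw [← Submodule.coe_smul, hrx', Submodule.coe_zero]
    exact Subtype.ext (hcond _ r hr h1)
  have hext : ExtClosed R C := by
    rintro L M N hfin f g hfinj hgsurj hrk ⟨hLfin, hL⟩ ⟨hNfin, hN⟩
    refine ⟨hfin, fun x r hr hrx => ?_⟩
    have hgx : g x = 0 := hN (g x) r hr (by rw [← map_smul, hrx, map_zero])
    have : x ∈ LinearMap.range f := by rw [hrk, LinearMap.mem_ker]; exact hgx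
    obtain ⟨l, rfl⟩ := this
    have : f (r • l) = f 0 := by rw [map_smul, hrx, map_zero]
    have hl0 : r • l = 0 := hfinj this
    rw [hL l r hr hl0, map_zero]
  have hquot := h C hsubcat hsub hext
  have hmem : ModuleCat.of R (R ⧸ p) ∈ C := by
    refine ⟨inferInstanceAs (Module.Finite R (R ⧸ p)), fun x r hr hrx => ?_⟩
    obtain ⟨y, rfl⟩ := Submodule.Quotient.mk_surjective p x
    rw [← Submodule.Quotient.mk_smul, Submodule.Quotient.mk_eq_zero] at hrx
    rw [Submodule.Quotient.mk_eq_zero]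
    rcases hp.mem_or_mem (by simpa [smul_eq_mul] using hrx) with hcase | hcase
    · exact absurd hcase hr
    · exact hcase
  set N : Submodule R (R ⧸ p) :=
    Submodule.span R {Submodule.Quotient.mk a} with hN
  have hq := hquot (ModuleCat.of R (R ⧸ p)) hmem N
  obtain ⟨hqfin, hqcond⟩ := hq
  set x₀ : (R ⧸ p) ⧸ N := Submodule.Quotient.mk (Submodule.Quotient.mk 1) with hx₀
  have hax₀ : a • x₀ = 0 := by
    rw [hx₀, ← Submodule.Quotient.mk_smul, Submodule.Quotient.mk_eq_zero,
      ← Submodule.Quotient.mk_smul]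
    have : a • (1 : R) = a := by simp
    rw [this]
    exact Submodule.subset_span rfl
  have hzero : x₀ = 0 := hqcond x₀ a hap hax₀
  rw [hx₀, Submodule.Quotient.mk_eq_zero, hN] at hzero
  obtain ⟨c, hc⟩ := Submodule.mem_span_singleton.mp hzero
  rw [← Submodule.Quotient.mk_smul] at hc
  have : (1 : R) - c • a ∈ p := (Submodule.Quotient.eq p).mp hc.symm
  have h1m : (1 : R) ∈ m :=
    by simpa using m.add_mem (hpmle this) (Ideal.mul_mem_left m c ham)
  exact hm.ne_top (m.eq_top_iff_one.mpr h1m)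
end Bwd

section Fwd
variable {R : Type u} [CommRing R] [IsNoetherianRing R] [IsArtinianRing R]

/-- If `M ∈ C` and `m` is a maximal ideal containing the annihilator of `M`,
then `R ⧸ m ∈ C`. -/
lemma quot_maximal_mem {C : Set (ModuleCat.{u} R)} (hC : IsModSubcat R C)
    (hsub : SubmoduleClosed R C) (M : ModuleCat.{u} R) (hM : M ∈ C)
    (m : Ideal R) (hm : m.IsMaximal)
    (hann : ∀ a : R, (∀ y : M, a • y = 0) → a ∈ m) :
    ModuleCat.of R (R ⧸ m) ∈ C := by
  haveI : Module.Finite R M := hC.2.2 M hM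
  obtain ⟨x, hx0, hx⟩ := exists_elem_smul_eq_zero (M := M) m hm hann
  set f : R →ₗ[R] M := LinearMap.toSpanSingleton R M x with hf
  have hker : LinearMap.ker f = m := by
    refine (hm.eq_of_le ?_ ?_).symm
    · intro h
      have h1 : (1 : R) ∈ LinearMap.ker f := by rw [h]; trivial
      rw [LinearMap.mem_ker, hf, LinearMap.toSpanSingleton_apply, one_smul] at h1
      exact hx0 h1
    · intro a ha
      rw [LinearMap.mem_ker, hf, LinearMap.toSpanSingleton_apply]
      exact hx a ha
  have e : (R ⧸ m) ≃ₗ[R] LinearMap.range f :=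
    (Submodule.quotEquivOfEq m (LinearMap.ker f) hker.symm).trans f.quotKerEquivRange
  have hrange : ModuleCat.of R (LinearMap.range f) ∈ C := hsub M hM (LinearMap.range f)
  exact hC.1 (ModuleCat.of R (LinearMap.range f)) (ModuleCat.of R (R ⧸ m)) e.symm hrange

lemma quot_mem {C : Set (ModuleCat.{u} R)} (hC : IsModSubcat R C)
    (hsub : SubmoduleClosed R C) (hext : ExtClosed R C)
    (M : ModuleCat.{u} R) (hM : M ∈ C) (N : Submodule R M) :
    ModuleCat.of R (M ⧸ N) ∈ C := by
  haveI : Module.Finite R M := hC.2.2 M hM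
  have wf : WellFounded ((· > ·) : Submodule R M → Submodule R M → Prop) :=
    IsNoetherian.wf inferInstance
  refine wf.induction (C := fun N : Submodule R M => ModuleCat.of R ((M : Type u) ⧸ N) ∈ C) N ?_
  intro N IH
  by_cases hN : N = ⊤
  · subst hN
    exact hC.2.1 _ (Submodule.Quotient.subsingleton_iff.mpr rfl)
  · haveI : Nontrivial ((M : Type u) ⧸ N) :=
      Submodule.Quotient.nontrivial_iff.mpr hN
    have hatomic : IsAtomic (Submodule R ((M : Type u) ⧸ N)) :=
      isAtomic_of_orderBot_wellFounded_lt
        wellFounded_lt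
    obtain ⟨A, hA, -⟩ :=
      (hatomic.eq_bot_or_exists_atom_le (⊤ : Submodule R ((M : Type u) ⧸ N))).resolve_left
        (by simpa using (bot_ne_top : (⊥ : Submodule R ((M : Type u) ⧸ N)) ≠ ⊤).symm)
    haveI hsimp : IsSimpleModule R A := isSimpleModule_iff_isAtom.mpr hA
    set T : Submodule R M := Submodule.comap N.mkQ A with hT
    have hmapT : Submodule.map N.mkQ T = A :=
      Submodule.map_comap_eq_of_surjective N.mkQ_surjective A
    have hNT : N < T := by
      refine lt_of_le_of_ne ?_ ?_
      · intro x hx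
        have hx0 : N.mkQ x = 0 := by
          rw [Submodule.mkQ_apply, Submodule.Quotient.mk_eq_zero]; exact hx
        rw [hT, Submodule.mem_comap, hx0]
        exact A.zero_mem
      · intro h
        apply hA.1
        rw [← hmapT, ← h]
        rw [eq_bot_iff]
        rintro y ⟨x, hx, rfl⟩
        have : N.mkQ x = 0 := by
          rw [Submodule.mkQ_apply, Submodule.Quotient.mk_eq_zero]; exact hx
        simp [this]
    have hTC : ModuleCat.of R ((M : Type u) ⧸ T) ∈ C := IH T hNT
    obtain ⟨mI, hmax, ⟨eA⟩⟩ := isSimpleModule_iff_quot_maximal.mp hsimp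
    have hRm : ModuleCat.of R (R ⧸ mI) ∈ C := by
      refine quot_maximal_mem hC hsub M hM mI hmax ?_
      intro a ha
      have hkill : ∀ v : A, a • v = 0 := by
        intro v
        apply Subtype.ext
        obtain ⟨y, hy⟩ := Submodule.Quotient.mk_surjective N (v : (M : Type u) ⧸ N)
        have : a • ((v : (M : Type u) ⧸ N)) = 0 := by
          rw [← hy, ← Submodule.Quotient.mk_smul, ha y, Submodule.Quotient.mk_zero]
        simpa using this
      have hu : Submodule.Quotient.mk (p := mI) a = (0 : R ⧸ mI) := by
        have h1 : (Submodule.Quotient.mk (p := mI) a)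
            = a • (Submodule.Quotient.mk (p := mI) (1 : R)) := by
          rw [← Submodule.Quotient.mk_smul, smul_eq_mul, mul_one]
        rw [h1, ← eA.apply_symm_apply (Submodule.Quotient.mk (p := mI) (1 : R)),
          ← map_smul, hkill, map_zero]
      rwa [Submodule.Quotient.mk_eq_zero] at hu
    have hAC : ModuleCat.of R (A : Type u) ∈ C :=
      hC.1 (ModuleCat.of R (R ⧸ mI)) (ModuleCat.of R (A : Type u)) eA.symm hRm
    have h2 : N ⊔ T = T := sup_eq_right.mpr (le_of_lt hNT)
    have e2 := Submodule.quotientQuotientEquivQuotientSup N T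
    rw [hmapT, h2] at e2
    have hQC : ModuleCat.of R (((M : Type u) ⧸ N) ⧸ A) ∈ C :=
      hC.1 (ModuleCat.of R ((M : Type u) ⧸ T))
        (ModuleCat.of R (((M : Type u) ⧸ N) ⧸ A)) e2.symm hTC
    refine hext (ModuleCat.of R (A : Type u)) (ModuleCat.of R ((M : Type u) ⧸ N))
      (ModuleCat.of R (((M : Type u) ⧸ N) ⧸ A))
      (inferInstanceAs (Module.Finite R ((M : Type u) ⧸ N))) A.subtype A.mkQ
      Subtype.val_injective A.mkQ_surjective ?_ hAC hQC
    rw [Submodule.range_subtype, Submodule.ker_mkQ]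
end Fwd

theorem artinian_iff_torsionFree_eq_serre
    (R : Type u) [CommRing R] [IsNoetherianRing R] :
    IsArtinianRing R ↔
      ∀ C : Set (ModuleCat.{u} R), IsModSubcat R C →
        SubmoduleClosed R C → ExtClosed R C → QuotClosed R C := by
  constructor
  · intro hart C hC hsub hext M hM N
    haveI : IsArtinianRing R := hart
    exact quot_mem hC hsub hext M hM N
  · intro h
    exact akizuki (prime_isMaximal_of_closure h)
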